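/- One-dimensional version of the exact formula (E) for the energy of the first excited state: let ψ_0, ψ_1 : ℝ → ℝ be twice continuously differentiable with −ψ_0'' + Vψ_0 = 0 and −ψ_1'' + Vψ_1 = E_1 ψ_1 on ℝ, let b ∈ ℝ be a point where ψ_0'(b) = 0, assume the Wronskian ψ_1(x)ψ_0'(x) − ψ_0(x)ψ_1'(x) tends to 0 as x → −∞, and assume ψ_1 ψ_0 is Lebesgue integrable on (−∞, b]. Then E_1 ∫_{−∞}^{b} ψ_1(x) ψ_0(x) dx = −ψ_0(b) ψ_1'(b). -/

import Mathlib

noncomputable section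

open MeasureTheory Filter

/-- One-dimensional version of the exact formula for the energy of the first excited
state: if `−ψ₀'' + Vψ₀ = 0`, `−ψ₁'' + Vψ₁ = E₁ψ₁`, `ψ₀'(b) = 0`, the Wronskian
`ψ₁ψ₀' − ψ₀ψ₁'` tends to `0` at `−∞`, and `ψ₁ψ₀` is integrable on `(−∞, b]`, then
`E₁ ∫_{−∞}^{b} ψ₁ψ₀ dx = −ψ₀(b) ψ₁'(b)`. -/
theorem first_excited_energy_formula_1d
    (V : ℝ → ℝ) (E₁ : ℝ) (ψ₀ ψ₁ : ℝ → ℝ)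
    (hψ₀ : ContDiff ℝ 2 ψ₀) (hψ₁ : ContDiff ℝ 2 ψ₁)
    (heq₀ : ∀ x, -deriv (deriv ψ₀) x + V x * ψ₀ x = 0)
    (heq₁ : ∀ x, -deriv (deriv ψ₁) x + V x * ψ₁ x = E₁ * ψ₁ x)
    (b : ℝ) (hb : deriv ψ₀ b = 0)
    (hwron : Tendsto (fun x => ψ₁ x * deriv ψ₀ x - ψ₀ x * deriv ψ₁ x) atBot (nhds 0))
    (hint : IntegrableOn (fun x => ψ₁ x * ψ₀ x) (Set.Iic b)) :
    E₁ * ∫ x in Set.Iic b, ψ₁ x * ψ₀ x = -(ψ₀ b * deriv ψ₁ b) := by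
  have hd₀ : Differentiable ℝ ψ₀ := hψ₀.differentiable (by norm_num)
  have hd₁ : Differentiable ℝ ψ₁ := hψ₁.differentiable (by norm_num)
  have hd₀' : Differentiable ℝ (deriv ψ₀) :=
    (hψ₀.iterate_deriv' 1 1).differentiable (by norm_num)
  have hd₁' : Differentiable ℝ (deriv ψ₁) :=
    (hψ₁.iterate_deriv' 1 1).differentiable (by norm_num)
  have hW : ∀ x ∈ Set.Iic b, HasDerivAt
      (fun x => ψ₁ x * deriv ψ₀ x - ψ₀ x * deriv ψ₁ x)
      (E₁ * (ψ₁ x * ψ₀ x)) x := by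
    intro x _
    have h1 := ((hd₁ x).hasDerivAt.mul (hd₀' x).hasDerivAt).sub
      ((hd₀ x).hasDerivAt.mul (hd₁' x).hasDerivAt)
    refine h1.congr_deriv ?_
    have e0 : deriv (deriv ψ₀) x = V x * ψ₀ x := by linarith [heq₀ x]
    have e1 : deriv (deriv ψ₁) x = V x * ψ₁ x - E₁ * ψ₁ x := by linarith [heq₁ x]
    rw [e0, e1]; ring
  have hint' : IntegrableOn (fun x => E₁ * (ψ₁ x * ψ₀ x)) (Set.Iic b) :=
    hint.const_mul E₁
  have := integral_Iic_of_hasDerivAt_of_tendsto' hW hint' hwron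
  rw [MeasureTheory.integral_const_mul] at this
  rw [this, hb]
  ring
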